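/- Let f : ℝ≥0 → ℝ≥0 be nondecreasing, right-continuous, and pure-jump in the sense that f(a) = Σ_{κ ≤ a} Δf(κ) where Δf(κ) = f(κ) − f(κ−) (with f(0−)=0), with countably many jumps. Then for 0 < q < 1, the strong q-variation satisfies V_q(f,[0,a]) = Σ_{κ ≤ a} (Δf(κ))^q for every a ≥ 0 (the sum possibly infinite). -/

import Mathlib

open Set
open scoped ENNReal

/-- The strong `q`-variation of `f` on `E`, valued in `ℝ≥0∞`. -/
noncomputable def pVarE (q : ℝ) (f : ℝ → ℝ) (E : Set ℝ) : ℝ≥0∞ :=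
  sSup {s | ∃ n : ℕ, ∃ t : ℕ → ℝ, (∀ i ≤ n, t i ∈ E) ∧ (∀ i < n, t i ≤ t (i + 1)) ∧
    s = ∑ i ∈ Finset.range n, (ENNReal.ofReal |f (t (i + 1)) - f (t i)|) ^ q}

lemma sum_tsum_comm {ι κ : Type*} (s : Finset ι) (F : ι → κ → ℝ≥0∞) :
    ∑' j, ∑ i ∈ s, F i j = ∑ i ∈ s, ∑' j, F i j := by
  classical
  induction s using Finset.induction with
  | empty => simp
  | @insert a s hx ih => simp only [Finset.sum_insert hx, ENNReal.tsum_add, ih]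

lemma rpow_finsum_le {ι : Type*} (s : Finset ι) (g : ι → ℝ≥0∞) {q : ℝ}
    (hq0 : 0 < q) (hq1 : q ≤ 1) :
    (∑ i ∈ s, g i) ^ q ≤ ∑ i ∈ s, g i ^ q := by
  classical
  induction s using Finset.induction with
  | empty => simp [ENNReal.zero_rpow_of_pos hq0]
  | @insert a s hx ih =>
      rw [Finset.sum_insert hx, Finset.sum_insert hx]
      exact le_trans (ENNReal.rpow_add_le_add_rpow _ _ hq0.le hq1) (by gcongr)

lemma rpow_tsum_le {ι : Type*} (g : ι → ℝ≥0∞) {q : ℝ} (hq0 : 0 < q) (hq1 : q ≤ 1) :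
    (∑' i, g i) ^ q ≤ ∑' i, g i ^ q := by
  rw [ENNReal.tsum_eq_iSup_sum]
  have hmono : Monotone (fun x : ℝ≥0∞ => x ^ q) := fun x y h => ENNReal.rpow_le_rpow h hq0.le
  rw [hmono.map_iSup_of_continuousAt ENNReal.continuous_rpow_const.continuousAt
    (by simp [ENNReal.zero_rpow_of_pos hq0])]
  exact iSup_le fun s => (rpow_finsum_le s g hq0 hq1).trans (ENNReal.sum_le_tsum s)

/-- for a nondecreasing, right-continuous pure-jump function
`f(a) = ∑_{κ ≤ a} Δf(κ)` (with jump times `t i > 0` and jump sizes `c i ≥ 0`), and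
`0 < q < 1`, the strong `q`-variation on `[0,a]` equals the (possibly infinite) sum
of the `q`-th powers of the jumps up to time `a`. -/
theorem stmt17 (q : ℝ) (hq0 : 0 < q) (hq1 : q < 1)
    (f : ℝ → ℝ) (t : ℕ → ℝ) (c : ℕ → ℝ)
    (ht : ∀ i, 0 < t i) (hc : ∀ i, 0 ≤ c i) (hinj : Function.Injective t)
    (hsum : ∀ a : ℝ, Summable (fun i => if t i ≤ a then c i else 0))
    (hf : ∀ a : ℝ, f a = ∑' i : ℕ, if t i ≤ a then c i else 0)
    (a : ℝ) (ha : 0 ≤ a) :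
    pVarE q f (Set.Icc 0 a) =
      ∑' i : ℕ, if t i ≤ a then (ENNReal.ofReal (c i)) ^ q else 0 := by
  classical
  -- monotonicity of f
  have hmono : ∀ {x y : ℝ}, x ≤ y → f x ≤ f y := by
    intro x y hxy
    rw [hf x, hf y]
    refine (hsum x).tsum_le_tsum (fun j => ?_) (hsum y)
    by_cases h : t j ≤ x
    · rw [if_pos h, if_pos (h.trans hxy)]
    · rw [if_neg h]; split_ifs with h2 <;> [exact hc j; exact le_rfl]
  -- summability of interval indicators
  have hsum' : ∀ x y : ℝ, Summable (fun j => if x < t j ∧ t j ≤ y then c j else 0) := by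
    intro x y
    refine Summable.of_nonneg_of_le (fun j => ?_) (fun j => ?_) (hsum y)
    · split_ifs <;> [exact hc j; exact le_rfl]
    · split_ifs with h1 h2 <;> first | exact le_rfl | exact (absurd h1.2 h2) | exact hc j | exact le_rfl
  -- increment formula
  have hjump : ∀ {x y : ℝ}, x ≤ y →
      f y - f x = ∑' j, if x < t j ∧ t j ≤ y then c j else 0 := by
    intro x y hxy
    rw [hf x, hf y, ← (hsum y).tsum_sub (hsum x)]
    refine tsum_congr fun j => ?_
    by_cases h1 : t j ≤ x
    · rw [if_pos h1, if_pos (h1.trans hxy), if_neg (by rintro ⟨h2, -⟩; exact absurd h1 (not_le.mpr h2))]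
      ring
    · rw [if_neg h1]
      by_cases h2 : t j ≤ y
      · rw [if_pos h2, if_pos ⟨not_le.mp h1, h2⟩]; ring
      · rw [if_neg h2, if_neg (by rintro ⟨-, h3⟩; exact h2 h3)]; ring
  have hof : ∀ {x y : ℝ}, x ≤ y → ENNReal.ofReal (f y - f x)
      = ∑' j, ENNReal.ofReal (if x < t j ∧ t j ≤ y then c j else 0) := by
    intro x y hxy
    rw [hjump hxy]
    exact ENNReal.ofReal_tsum_of_nonneg (fun j => by split_ifs <;> [exact hc j; exact le_rfl]) (hsum' x y)
  apply le_antisymm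
  · -- upper bound
    apply sSup_le
    rintro s ⟨n, u, humem, hustep, rfl⟩
    have humono : ∀ i j, i ≤ j → j ≤ n → u i ≤ u j := by
      intro i j hij hjn
      induction j with
      | zero => rw [Nat.le_zero.mp hij]
      | succ m ihm =>
        rcases Nat.eq_or_lt_of_le hij with h | h
        · rw [← h]
        · exact (ihm (by omega) (by omega)).trans (hustep m (by omega))
    calc ∑ i ∈ Finset.range n, (ENNReal.ofReal |f (u (i + 1)) - f (u i)|) ^ q
        ≤ ∑ i ∈ Finset.range n, ∑' j,
            (ENNReal.ofReal (if u i < t j ∧ t j ≤ u (i+1) then c j else 0)) ^ q := by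
          refine Finset.sum_le_sum fun i hi => ?_
          rw [abs_of_nonneg (sub_nonneg.mpr (hmono (hustep i (Finset.mem_range.mp hi)))),
            hof (hustep i (Finset.mem_range.mp hi))]
          exact rpow_tsum_le _ hq0 hq1.le
      _ = ∑' j, ∑ i ∈ Finset.range n,
            (ENNReal.ofReal (if u i < t j ∧ t j ≤ u (i+1) then c j else 0)) ^ q := by
          exact (sum_tsum_comm _ _).symm
      _ ≤ ∑' i, if t i ≤ a then (ENNReal.ofReal (c i)) ^ q else 0 := by
          refine ENNReal.tsum_le_tsum fun j => ?_
          by_cases hex : ∃ i, i < n ∧ u i < t j ∧ t j ≤ u (i+1)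
          · obtain ⟨i₀, hi₀n, hP⟩ := hex
            have hta : t j ≤ a := hP.2.trans ((humem (i₀+1) (by omega)).2)
            rw [if_pos hta]
            have : ∑ i ∈ Finset.range n,
                (ENNReal.ofReal (if u i < t j ∧ t j ≤ u (i+1) then c j else 0)) ^ q
                = (ENNReal.ofReal (c j)) ^ q := by
              rw [Finset.sum_eq_single i₀]
              · rw [if_pos hP]
              · intro i hi hne
                have hin := Finset.mem_range.mp hi
                rw [if_neg, ENNReal.ofReal_zero, ENNReal.zero_rpow_of_pos hq0]
                rintro ⟨h1, h2⟩
                rcases lt_or_gt_of_ne hne with h | h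
                · exact absurd (h2.trans_lt (lt_of_le_of_lt (humono (i+1) i₀ (by omega) (by omega)) hP.1)) (lt_irrefl _).elim
                · exact absurd (hP.2.trans_lt (lt_of_le_of_lt (humono (i₀+1) i (by omega) (by omega)) h1)) (lt_irrefl _).elim
              · intro h; exact absurd (Finset.mem_range.mpr hi₀n) h
            rw [this]
          · push_neg at hex
            have : ∀ i ∈ Finset.range n,
                (ENNReal.ofReal (if u i < t j ∧ t j ≤ u (i+1) then c j else 0)) ^ q = 0 := by
              intro i hi
              rw [if_neg (fun hP => absurd hP.2 (not_le.mpr (hex i (Finset.mem_range.mp hi) hP.1))), ENNReal.ofReal_zero,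
                ENNReal.zero_rpow_of_pos hq0]
            rw [Finset.sum_eq_zero this]
            positivity
  · -- lower bound
    rw [ENNReal.tsum_eq_iSup_sum]
    refine iSup_le fun F => ?_
    rw [← Finset.sum_filter]
    set F' : Finset ℕ := F.filter (fun i => t i ≤ a) with hF'
    let r : ℕ → ℕ → Prop := fun i j => t i ≤ t j
    haveI : DecidableRel r := fun i j => inferInstanceAs (Decidable (t i ≤ t j))
    haveI : IsTrans ℕ r := ⟨fun x y z h1 h2 => le_trans h1 h2⟩
    haveI : Std.Antisymm r := ⟨fun x y h1 h2 => hinj (le_antisymm h1 h2)⟩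
    haveI : Std.Total r := ⟨fun x y => le_total _ _⟩
    set L : List ℕ := F'.sort r with hL
    set k : ℕ := L.length with hk
    rcases Nat.eq_zero_or_pos k with hk0 | hkpos
    · have : F' = ∅ := Finset.card_eq_zero.mp (by rw [← Finset.length_sort (r := r), ← hL, ← hk, hk0])
      rw [this, Finset.sum_empty]
      positivity
    set e : ℕ → ℕ := fun m => L.getD m 0 with he
    have hgete : ∀ m (h : m < k), e m = L.get ⟨m, h⟩ := fun m h => List.getD_eq_get L 0 ⟨m, h⟩
    have hmemF' : ∀ m, m < k → e m ∈ F' := by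
      intro m h
      rw [hgete m h]
      exact (Finset.mem_sort r).mp (L.get_mem _)
    have hta : ∀ m, m < k → t (e m) ≤ a := by
      intro m h
      exact (Finset.mem_filter.mp (hmemF' m h)).2
    have hstrict : ∀ m m', m < m' → m' < k → t (e m) < t (e m') := by
      intro m m' hmm' hm'
      have hm : m < k := hmm'.trans hm'
      rw [hgete m hm, hgete m' hm']
      have hle : r (L.get ⟨m, hm⟩) (L.get ⟨m', hm'⟩) :=
        List.pairwise_iff_get.mp (Finset.pairwise_sort F' r) _ _ (Fin.mk_lt_mk.mpr hmm')
      refine lt_of_le_of_ne hle fun heq => ?_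
      have h2 := (List.Nodup.get_inj_iff (Finset.sort_nodup F' r)).mp (hinj heq)
      exact absurd (Fin.mk_eq_mk.mp h2) hmm'.ne
    set s' : ℕ → ℝ := fun m => if m = 0 then t (e 0) / 2 else (t (e (m - 1)) + t (e m)) / 2
      with hs'
    set u : ℕ → ℝ := fun i => if i % 2 = 0 then s' (i / 2) else t (e (i / 2)) with hu
    have hu_even : ∀ m : ℕ, u (2 * m) = s' m := by
      intro m
      simp only [hu]
      rw [show 2 * m % 2 = 0 from by omega, show 2 * m / 2 = m from by omega]
      simp
    have hu_odd : ∀ m : ℕ, u (2 * m + 1) = t (e m) := by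
      intro m
      simp only [hu]
      rw [show (2 * m + 1) % 2 = 1 from by omega, show (2 * m + 1) / 2 = m from by omega]
      simp
    have hs0 : ∀ m, 0 ≤ s' m := by
      intro m
      simp only [hs']
      have h0 := (ht (e 0)).le
      have h1 := (ht (e (m - 1))).le
      have h2 := (ht (e m)).le
      split_ifs <;> positivity
    have hsk : ∀ m, m < k → s' m < t (e m) := by
      intro m hm
      simp only [hs']
      split_ifs with h0
      · rw [h0]; exact half_lt_self (ht _)
      · have := hstrict (m - 1) m (by omega) hm
        linarith
    have hks : ∀ m, m + 1 < k → t (e m) ≤ s' (m + 1) := by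
      intro m hm
      simp only [hs']
      rw [if_neg (by omega)]
      have := hstrict m (m + 1) (by omega) hm
      simp only [Nat.add_sub_cancel]
      linarith
    -- membership of partition points
    have hmem : ∀ i ≤ 2 * k - 1, u i ∈ Icc (0:ℝ) a := by
      intro i hi
      have him : i / 2 < k := by omega
      rcases Nat.even_or_odd i with ⟨m, hm⟩ | ⟨m, hm⟩
      · have : i = 2 * m := by omega
        rw [this, hu_even]
        have hm' : m < k := by omega
        exact ⟨hs0 m, ((hsk m hm').le).trans (hta m hm')⟩
      · have : i = 2 * m + 1 := by omega
        rw [this, hu_odd]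
        have hm' : m < k := by omega
        exact ⟨(ht _).le, hta m hm'⟩
    have hsteps : ∀ i < 2 * k - 1, u i ≤ u (i + 1) := by
      intro i hi
      rcases Nat.even_or_odd i with ⟨m, hm⟩ | ⟨m, hm⟩
      · have h1 : i = 2 * m := by omega
        rw [h1, hu_even, hu_odd]
        exact (hsk m (by omega)).le
      · have h1 : i = 2 * m + 1 := by omega
        rw [h1, hu_odd, show 2 * m + 1 + 1 = 2 * (m + 1) from rfl, hu_even]
        exact hks m (by omega)
    -- key pointwise bound
    have key : ∀ m, m < k →
        ENNReal.ofReal (c (e m)) ^ q ≤ (ENNReal.ofReal |f (u (2 * m + 1)) - f (u (2 * m))|) ^ q := by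
      intro m hm
      rw [hu_even, hu_odd]
      have hlt := hsk m hm
      have hfs : c (e m) ≤ f (t (e m)) - f (s' m) := by
        rw [hjump hlt.le]
        have h1 := (hsum' (s' m) (t (e m))).le_tsum (e m)
          (fun j _ => by split_ifs with h <;> [exact hc j; exact le_rfl])
        rwa [if_pos ⟨hlt, le_refl _⟩] at h1
      rw [abs_of_nonneg (sub_nonneg.mpr (hmono hlt.le))]
      exact ENNReal.rpow_le_rpow (ENNReal.ofReal_le_ofReal hfs) hq0.le
    calc ∑ i ∈ F', ENNReal.ofReal (c i) ^ q
        = ∑ m ∈ Finset.range k, ENNReal.ofReal (c (e m)) ^ q := by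
          refine (Finset.sum_bij (fun m hm => e m)
            (fun m hm => hmemF' m (Finset.mem_range.mp hm)) ?_ ?_ (fun m hm => rfl)).symm
          · intro m hm m' hm' heq
            by_contra hne
            rcases Nat.lt_or_ge m m' with h | h
            · exact (hstrict m m' h (Finset.mem_range.mp hm')).ne (congrArg t heq)
            · exact (hstrict m' m (by omega) (Finset.mem_range.mp hm)).ne (congrArg t heq.symm)
          · intro b hb
            have hbL : b ∈ L := (Finset.mem_sort r).mpr hb
            obtain ⟨m, hmb⟩ := List.mem_iff_get.mp hbL
            refine ⟨m.1, Finset.mem_range.mpr m.2, ?_⟩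
            show e m.1 = b
            rw [hgete m.1 m.2]
            simpa [Fin.eta] using hmb
      _ ≤ ∑ m ∈ Finset.range k, (ENNReal.ofReal |f (u (2 * m + 1)) - f (u (2 * m))|) ^ q :=
          Finset.sum_le_sum fun m hm => key m (Finset.mem_range.mp hm)
      _ = ∑ i ∈ (Finset.range k).image (fun m => 2 * m),
            (ENNReal.ofReal |f (u (i + 1)) - f (u i)|) ^ q := by
          rw [Finset.sum_image (fun x _ y _ h => by omega)]
      _ ≤ ∑ i ∈ Finset.range (2 * k - 1), (ENNReal.ofReal |f (u (i + 1)) - f (u i)|) ^ q := by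
          refine Finset.sum_le_sum_of_subset fun x hx => ?_
          simp only [Finset.mem_image, Finset.mem_range] at hx ⊢
          omega
      _ ≤ pVarE q f (Icc 0 a) := le_sSup ⟨2 * k - 1, u, hmem, hsteps, rfl⟩
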